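/- Suppose M_{D,E,F} with diagonal A ∈ B(X), B ∈ B(Y) inner regular, C ∈ B(Z) is invertible for some D, E, F. Then N(B) embeds (via a bounded left invertible operator) into X/R(A), and Y/R(B) embeds into N(C). -/

import Mathlib

/-- An operator between (semi)normed spaces is invertible if it has a bounded two-sided
inverse. -/
def IsInvertibleCLM {U V : Type*} [SeminormedAddCommGroup U] [NormedSpace ℝ U]
    [SeminormedAddCommGroup V] [NormedSpace ℝ V] (T : U →L[ℝ] V) : Prop :=
  ∃ T' : V →L[ℝ] U, T'.comp T = ContinuousLinearMap.id ℝ U ∧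
    T.comp T' = ContinuousLinearMap.id ℝ V

/-- The `3 × 3` upper triangular operator matrix with diagonal `A, B, C` and strictly
upper entries `D, E, F`, acting on `X ⊕ Y ⊕ Z` by
`(x, y, z) ↦ (A x + D y + E z, B y + F z, C z)`. -/
def triM {X Y Z : Type*}
    [NormedAddCommGroup X] [NormedSpace ℝ X]
    [NormedAddCommGroup Y] [NormedSpace ℝ Y]
    [NormedAddCommGroup Z] [NormedSpace ℝ Z]
    (A : X →L[ℝ] X) (B : Y →L[ℝ] Y) (C : Z →L[ℝ] Z)
    (D : Y →L[ℝ] X) (E : Z →L[ℝ] X) (F : Z →L[ℝ] Y) :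
    (X × Y × Z) →L[ℝ] (X × Y × Z) :=
  (A.comp (ContinuousLinearMap.fst ℝ X (Y × Z)) +
      D.comp ((ContinuousLinearMap.fst ℝ Y Z).comp (ContinuousLinearMap.snd ℝ X (Y × Z))) +
      E.comp ((ContinuousLinearMap.snd ℝ Y Z).comp (ContinuousLinearMap.snd ℝ X (Y × Z)))).prod
    ((B.comp ((ContinuousLinearMap.fst ℝ Y Z).comp (ContinuousLinearMap.snd ℝ X (Y × Z))) +
        F.comp ((ContinuousLinearMap.snd ℝ Y Z).comp (ContinuousLinearMap.snd ℝ X (Y × Z)))).prod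
      (C.comp ((ContinuousLinearMap.snd ℝ Y Z).comp (ContinuousLinearMap.snd ℝ X (Y × Z)))))

/-- A continuous linear map vanishing on a submodule descends to a continuous linear map
on the quotient (with its quotient seminorm). -/
lemma quotLiftCLM {M N : Type*} [SeminormedAddCommGroup M] [NormedSpace ℝ M]
    [SeminormedAddCommGroup N] [NormedSpace ℝ N] (S : Submodule ℝ M)
    (φ : M →L[ℝ] N) (hφ : ∀ s ∈ S, φ s = 0) :
    ∃ L : (M ⧸ S) →L[ℝ] N, ∀ m, L (Submodule.Quotient.mk m) = φ m := by
  have hle : S ≤ LinearMap.ker (φ : M →ₗ[ℝ] N) := fun s hs => by simpa using hφ s hs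
  set L₀ := S.liftQ (φ : M →ₗ[ℝ] N) hle with hL₀
  have hbound : ∀ q : M ⧸ S, ‖L₀ q‖ ≤ ‖φ‖ * ‖q‖ := by
    intro q
    refine le_of_forall_pos_le_add (fun ε hε => ?_)
    obtain ⟨m, rfl, hm⟩ :=
      Submodule.Quotient.norm_mk_lt q (div_pos hε (by positivity : (0:ℝ) < ‖φ‖ + 1))
    have h1 : L₀ (Submodule.Quotient.mk m) = φ m := rfl
    rw [h1]
    calc ‖φ m‖ ≤ ‖φ‖ * ‖m‖ := φ.le_opNorm m
    _ ≤ ‖φ‖ * (‖(Submodule.Quotient.mk m : M ⧸ S)‖ + ε / (‖φ‖ + 1)) :=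
        mul_le_mul_of_nonneg_left hm.le (norm_nonneg _)
    _ ≤ ‖φ‖ * ‖(Submodule.Quotient.mk m : M ⧸ S)‖ + ε := by
        rw [mul_add]
        gcongr
        rw [div_eq_mul_inv]
        calc ‖φ‖ * (ε * (‖φ‖+1)⁻¹) ≤ (‖φ‖+1) * (ε * (‖φ‖+1)⁻¹) := by gcongr; linarith
        _ = ε := by field_simp
  exact ⟨L₀.mkContinuous ‖φ‖ hbound, fun m => rfl⟩

/-- The quotient map as a continuous linear map. -/
noncomputable def mkQCLM {M : Type*} [SeminormedAddCommGroup M] [NormedSpace ℝ M]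
    (S : Submodule ℝ M) : M →L[ℝ] (M ⧸ S) :=
  S.mkQ.mkContinuous 1 (fun m => by
    simpa [one_mul] using Submodule.Quotient.norm_mk_le S m)

@[simp] lemma mkQCLM_apply {M : Type*} [SeminormedAddCommGroup M] [NormedSpace ℝ M]
    (S : Submodule ℝ M) (m : M) : mkQCLM S m = Submodule.Quotient.mk m := rfl

/-- If some completion `M_{D,E,F}` with diagonal `A`, `B` inner regular, `C` is
invertible, then `N(B)` embeds into `X/R(A)` and `Y/R(B)` embeds into `N(C)`
via bounded left invertible operators. -/
theorem completion_necessary_embeddings {X Y Z : Type*}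
    [NormedAddCommGroup X] [NormedSpace ℝ X] [CompleteSpace X]
    [NormedAddCommGroup Y] [NormedSpace ℝ Y] [CompleteSpace Y]
    [NormedAddCommGroup Z] [NormedSpace ℝ Z] [CompleteSpace Z]
    (A : X →L[ℝ] X) (B : Y →L[ℝ] Y) (C : Z →L[ℝ] Z)
    (hB : ∃ B' : Y →L[ℝ] Y, B.comp (B'.comp B) = B)
    (h : ∃ (D : Y →L[ℝ] X) (E : Z →L[ℝ] X) (F : Z →L[ℝ] Y),
      IsInvertibleCLM (triM A B C D E F)) :
    (∃ (J₁ : ↥(LinearMap.ker (B : Y →ₗ[ℝ] Y)) →L[ℝ] (X ⧸ LinearMap.range (A : X →ₗ[ℝ] X)))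
      (J₁' : (X ⧸ LinearMap.range (A : X →ₗ[ℝ] X)) →L[ℝ] ↥(LinearMap.ker (B : Y →ₗ[ℝ] Y))),
        J₁'.comp J₁ = ContinuousLinearMap.id ℝ ↥(LinearMap.ker (B : Y →ₗ[ℝ] Y))) ∧
    (∃ (J₂ : (Y ⧸ LinearMap.range (B : Y →ₗ[ℝ] Y)) →L[ℝ] ↥(LinearMap.ker (C : Z →ₗ[ℝ] Z)))
      (J₂' : ↥(LinearMap.ker (C : Z →ₗ[ℝ] Z)) →L[ℝ] (Y ⧸ LinearMap.range (B : Y →ₗ[ℝ] Y))),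
        J₂'.comp J₂ = ContinuousLinearMap.id ℝ (Y ⧸ LinearMap.range (B : Y →ₗ[ℝ] Y))) := by
  obtain ⟨B', hB'⟩ := hB
  obtain ⟨D, E, F, M', hl, hr⟩ := h
  have hB'v : ∀ y, B (B' (B y)) = B y := fun y =>
    congrArg (fun (T : Y →L[ℝ] Y) => T y) hB'
  have hMv : ∀ v : X × Y × Z,
      triM A B C D E F v = (A v.1 + D v.2.1 + E v.2.2, B v.2.1 + F v.2.2, C v.2.2) :=
    fun v => rfl
  have hlv : ∀ v : X × Y × Z, M' (triM A B C D E F v) = v := fun v =>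
    congrArg (fun (T : (X × Y × Z) →L[ℝ] (X × Y × Z)) => T v) hl
  have hrv : ∀ v : X × Y × Z, triM A B C D E F (M' v) = v := fun v =>
    congrArg (fun (T : (X × Y × Z) →L[ℝ] (X × Y × Z)) => T v) hr
  -- the (2,1) block of M'
  set b₁ : X →L[ℝ] Y := (ContinuousLinearMap.fst ℝ Y Z).comp
      ((ContinuousLinearMap.snd ℝ X (Y × Z)).comp
        (M'.comp (ContinuousLinearMap.inl ℝ X (Y × Z)))) with hb₁
  have hb₁v : ∀ x, b₁ x = (M' (x, 0, 0)).2.1 := fun x => rfl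
  -- the (3,2) block of M'
  set c₂ : Y →L[ℝ] Z := (ContinuousLinearMap.snd ℝ Y Z).comp
      ((ContinuousLinearMap.snd ℝ X (Y × Z)).comp
        (M'.comp ((ContinuousLinearMap.inr ℝ X (Y × Z)).comp
          (ContinuousLinearMap.inl ℝ Y Z)))) with hc₂
  have hc₂v : ∀ y, c₂ y = (M' (0, y, 0)).2.2 := fun y => rfl
  -- the (2,2) block of M'
  set b₂ : Y →L[ℝ] Y := (ContinuousLinearMap.fst ℝ Y Z).comp
      ((ContinuousLinearMap.snd ℝ X (Y × Z)).comp
        (M'.comp ((ContinuousLinearMap.inr ℝ X (Y × Z)).comp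
          (ContinuousLinearMap.inl ℝ Y Z)))) with hb₂
  have hb₂v : ∀ y, b₂ y = (M' (0, y, 0)).2.1 := fun y => rfl
  -- key identities
  have f1 : ∀ x, b₁ (A x) = 0 := by
    intro x
    have h1 : triM A B C D E F (x, 0, 0) = (A x, 0, 0) := by
      rw [hMv]; simp
    have h2 := hlv (x, 0, 0)
    rw [h1] at h2
    rw [hb₁v, h2]
  have f2 : ∀ y, B y = 0 → b₁ (D y) = y := by
    intro y hy
    have h1 : triM A B C D E F (0, y, 0) = (D y, 0, 0) := by
      rw [hMv]; simp [hy]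
    have h2 := hlv (0, y, 0)
    rw [h1] at h2
    rw [hb₁v, h2]
  have f3 : ∀ y, C (c₂ y) = 0 := by
    intro y
    have h2 := hrv (0, y, 0)
    rw [hMv] at h2
    have := congrArg (fun v : X × Y × Z => v.2.2) h2
    simpa [hc₂v] using this
  have f4 : ∀ y, y - F (c₂ y) ∈ LinearMap.range (B : Y →ₗ[ℝ] Y) := by
    intro y
    have h2 := hrv (0, y, 0)
    rw [hMv] at h2
    have h3 := congrArg (fun v : X × Y × Z => v.2.1) h2
    simp only at h3
    refine ⟨b₂ y, ?_⟩
    rw [hb₂v, hc₂v]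
    rw [eq_sub_iff_add_eq]
    exact h3
  constructor
  · -- N(B) ⪯ X / R(A)
    set φ : X →L[ℝ] Y := b₁ - (B'.comp B).comp b₁ with hφdef
    have hφv : ∀ x, φ x = b₁ x - B' (B (b₁ x)) := fun x => rfl
    have hφker : ∀ x, φ x ∈ LinearMap.ker (B : Y →ₗ[ℝ] Y) := by
      intro x
      simp only [LinearMap.mem_ker, ContinuousLinearMap.coe_coe]
      rw [hφv, map_sub, hB'v, sub_self]
    set φc : X →L[ℝ] ↥(LinearMap.ker (B : Y →ₗ[ℝ] Y)) :=
      φ.codRestrict (LinearMap.ker (B : Y →ₗ[ℝ] Y)) hφker with hφc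
    have hφczero : ∀ s ∈ LinearMap.range (A : X →ₗ[ℝ] X), φc s = 0 := by
      rintro s ⟨x, rfl⟩
      apply Subtype.ext
      show φ (A x) = 0
      rw [hφv, f1, map_zero, map_zero, sub_self]
    obtain ⟨J₁', hJ₁'⟩ := quotLiftCLM (LinearMap.range (A : X →ₗ[ℝ] X)) φc hφczero
    refine ⟨(mkQCLM (LinearMap.range (A : X →ₗ[ℝ] X))).comp
      (D.comp (Submodule.subtypeL (LinearMap.ker (B : Y →ₗ[ℝ] Y)))), J₁', ?_⟩
    ext y
    obtain ⟨y, hy⟩ := y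
    have hy' : B y = 0 := hy
    simp only [ContinuousLinearMap.comp_apply, ContinuousLinearMap.id_apply,
      Submodule.subtypeL_apply, mkQCLM_apply]
    rw [hJ₁']
    show φ (D y) = y
    rw [hφv, f2 y hy', hy', map_zero, sub_zero]
  · -- Y / R(B) ⪯ N(C)
    set ψ : Y →L[ℝ] Z := c₂.comp (ContinuousLinearMap.id ℝ Y - B.comp B') with hψdef
    have hψv : ∀ y, ψ y = c₂ (y - B (B' y)) := fun y => rfl
    have hψker : ∀ y, ψ y ∈ LinearMap.ker (C : Z →ₗ[ℝ] Z) := by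
      intro y
      simp only [LinearMap.mem_ker, ContinuousLinearMap.coe_coe]
      rw [hψv]
      exact f3 _
    set ψc : Y →L[ℝ] ↥(LinearMap.ker (C : Z →ₗ[ℝ] Z)) :=
      ψ.codRestrict (LinearMap.ker (C : Z →ₗ[ℝ] Z)) hψker with hψc
    have hψczero : ∀ s ∈ LinearMap.range (B : Y →ₗ[ℝ] Y), ψc s = 0 := by
      rintro s ⟨u, rfl⟩
      apply Subtype.ext
      show ψ (B u) = 0
      rw [hψv, hB'v, sub_self, map_zero]
    obtain ⟨J₂, hJ₂⟩ := quotLiftCLM (LinearMap.range (B : Y →ₗ[ℝ] Y)) ψc hψczero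
    refine ⟨J₂, (mkQCLM (LinearMap.range (B : Y →ₗ[ℝ] Y))).comp
      (F.comp (Submodule.subtypeL (LinearMap.ker (C : Z →ₗ[ℝ] Z)))), ?_⟩
    ext q
    obtain ⟨y, rfl⟩ := Submodule.Quotient.mk_surjective _ q
    simp only [ContinuousLinearMap.comp_apply, ContinuousLinearMap.id_apply,
      Submodule.subtypeL_apply, mkQCLM_apply]
    rw [hJ₂]
    have hval : ((ψc y : ↥(LinearMap.ker (C : Z →ₗ[ℝ] Z))) : Z) = c₂ (y - B (B' y)) := rfl
    rw [Submodule.Quotient.eq]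
    have h5 := f4 (y - B (B' y))
    have h6 : B (B' y) ∈ LinearMap.range (B : Y →ₗ[ℝ] Y) := ⟨B' y, rfl⟩
    have : F ((ψc y : ↥(LinearMap.ker (C : Z →ₗ[ℝ] Z))) : Z) - y =
        -((y - B (B' y)) - F (c₂ (y - B (B' y)))) - B (B' y) := by
      rw [hval]; abel
    rw [this]
    exact Submodule.sub_mem _ (Submodule.neg_mem _ h5) h6
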